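/- Monotonicity of the limiting multi-period value in information (Theorem 3.3): Let (X,Y) and (X,Z) be Gaussian processes indexed by t = 1,...,T with common real-valued component X. Let F_t = σ((X,Y)_{≤t}) and G_t = σ((X,Z)_{≤t}) (with F_0 = G_0 trivial), and define V_0(X, 𝔽) = E[Σ_t X_t] + φ_0(ε_1) Σ_{t=1}^T (Var(Σ_{u=t}^T X_u | F_{t-1}) - Var(Σ_{u=t}^T X_u | F_t))^{1/2} with φ_0(ε_1) ≥ 0, and analogously V_0(X, 𝔾). If F_t ⊆ G_t for every t and t ↦ Var(Σ_{s=1}^T X_s | F_t) is convex (equivalently, the nonrandom increments Var(Σ X_s|F_{t-1}) - Var(Σ X_s|F_t) are nonincreasing in t), then V_0(X, 𝔽) ≥ V_0(X, 𝔾). -/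

import Mathlib

open MeasureTheory ProbabilityTheory Finset

private lemma sqrt_tangent {a b : ℝ} (ha : 0 ≤ a) (hb : 0 ≤ b) (hab : a = 0 → b = 0) :
    Real.sqrt b ≤ Real.sqrt a + (b - a) * (2 * Real.sqrt a)⁻¹ := by
  rcases eq_or_lt_of_le ha with h | h
  · rw [hab h.symm, ← h]; simp
  · have hsa : 0 < Real.sqrt a := Real.sqrt_pos.2 h
    have h1 : Real.sqrt a ^ 2 = a := Real.sq_sqrt ha
    have h2 : Real.sqrt b ^ 2 = b := Real.sq_sqrt hb
    have hsb : 0 ≤ Real.sqrt b := Real.sqrt_nonneg b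
    have h3 : (0:ℝ) < 2 * Real.sqrt a := by linarith
    have expand : (Real.sqrt a + (b - a) * (2 * Real.sqrt a)⁻¹) * (2 * Real.sqrt a)
        = 2 * a + (b - a) := by
      rw [add_mul, mul_assoc, inv_mul_cancel₀ (ne_of_gt h3), mul_one]
      nlinarith [h1]
    have key : Real.sqrt b * (2 * Real.sqrt a)
        ≤ (Real.sqrt a + (b - a) * (2 * Real.sqrt a)⁻¹) * (2 * Real.sqrt a) := by
      rw [expand]
      nlinarith [sq_nonneg (Real.sqrt a - Real.sqrt b)]
    exact le_of_mul_le_mul_right key h3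

private lemma telescope_Ioc (f : ℕ → ℝ) (t : ℕ) :
    ∑ s ∈ Ioc 0 t, (f (s - 1) - f s) = f 0 - f t := by
  induction t with
  | zero => simp
  | succ n ih => rw [Finset.sum_Ioc_succ_top (Nat.zero_le n), ih]; simp

private lemma sum_sqrt_le (T : ℕ) (c d : ℕ → ℝ)
    (hc0 : ∀ t, 1 ≤ t → t ≤ T → 0 ≤ c t)
    (hd0 : ∀ t, 1 ≤ t → t ≤ T → 0 ≤ d t)
    (hmono : ∀ t, 1 ≤ t → t + 1 ≤ T → c (t + 1) ≤ c t)
    (hps : ∀ t, t ≤ T → ∑ s ∈ Ioc 0 t, c s ≤ ∑ s ∈ Ioc 0 t, d s)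
    (htot : ∑ s ∈ Ioc 0 T, d s = ∑ s ∈ Ioc 0 T, c s) :
    ∑ t ∈ Ioc 0 T, Real.sqrt (d t) ≤ ∑ t ∈ Ioc 0 T, Real.sqrt (c t) := by
  -- zeros of c propagate to the right
  have hczero : ∀ t s, 1 ≤ t → t ≤ s → s ≤ T → c t = 0 → c s = 0 := by
    intro t s ht hts hsT hct
    induction s, hts using Nat.le_induction with
    | base => exact hct
    | succ n hn ih =>
      have h1 : c (n + 1) ≤ c n := hmono n (ht.trans hn) hsT
      have h2 : c n = 0 := ih (le_of_lt (Nat.lt_of_lt_of_le (Nat.lt_succ_self n) hsT))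
      have h3 : 0 ≤ c (n + 1) := hc0 _ (le_trans ht (Nat.le_succ_of_le hn)) hsT
      linarith [h1, h3, h2.le]
  -- if c vanishes at some point, the total of c is attained already before
  have hCT : ∀ t, 1 ≤ t → t ≤ T → c t = 0 →
      ∑ s ∈ Ioc 0 T, c s = ∑ s ∈ Ioc 0 (t - 1), c s := by
    intro t ht hT hct
    have h1 : t - 1 ≤ T := le_trans (Nat.sub_le t 1) hT
    rw [← Finset.sum_Ioc_consecutive c (Nat.zero_le (t - 1)) h1]
    have h2 : ∑ s ∈ Ioc (t - 1) T, c s = 0 := by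
      refine Finset.sum_eq_zero fun s hs => ?_
      rw [Finset.mem_Ioc] at hs
      have hts : t ≤ s := by omega
      exact hczero t s ht hts hs.2 hct
    rw [h2, add_zero]
  -- zeros of c force zeros of d
  have hdzero : ∀ t, 1 ≤ t → t ≤ T → c t = 0 → d t = 0 := by
    intro t ht hT hct
    have h1 := hCT t ht hT hct
    have h2 := hps (t - 1) (le_trans (Nat.sub_le t 1) hT)
    have h3 : ∑ s ∈ Ioc 0 (t - 1), d s + ∑ s ∈ Ioc (t - 1) T, d s = ∑ s ∈ Ioc 0 T, d s :=
      Finset.sum_Ioc_consecutive d (Nat.zero_le (t - 1)) (le_trans (Nat.sub_le t 1) hT)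
    have h4 : d t ≤ ∑ s ∈ Ioc (t - 1) T, d s := by
      refine Finset.single_le_sum (fun s hs => ?_) ?_
      · rw [Finset.mem_Ioc] at hs; exact hd0 s (by omega) hs.2
      · rw [Finset.mem_Ioc]; exact ⟨by omega, hT⟩
    have h5 : 0 ≤ d t := hd0 t ht hT
    linarith
  set lam : ℕ → ℝ := fun t => (2 * Real.sqrt (c t))⁻¹ with hlam
  -- Abel-type estimate
  have habel : ∀ n, n ≤ T →
      ∑ t ∈ Ioc 0 n, (d t - c t) * lam t ≤ (∑ t ∈ Ioc 0 n, (d t - c t)) * lam n := by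
    intro n hn
    induction n with
    | zero => simp
    | succ n ih =>
      have hn' : n ≤ T := le_of_lt (Nat.lt_of_lt_of_le (Nat.lt_succ_self n) hn)
      have ih' := ih hn'
      rw [Finset.sum_Ioc_succ_top (Nat.zero_le n), Finset.sum_Ioc_succ_top (Nat.zero_le n)]
      have hE : 0 ≤ ∑ t ∈ Ioc 0 n, (d t - c t) := by
        rw [Finset.sum_sub_distrib]
        linarith [hps n hn']
      have key : (∑ t ∈ Ioc 0 n, (d t - c t)) * lam n
          ≤ (∑ t ∈ Ioc 0 n, (d t - c t)) * lam (n + 1) := by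
        rcases Nat.eq_zero_or_pos n with h0 | hpos
        · subst h0; simp
        rcases eq_or_lt_of_le (hc0 (n + 1) (by omega) hn) with hc1 | hc1
        · -- c (n+1) = 0, then the partial sum is zero
          have hEz : ∑ t ∈ Ioc 0 n, (d t - c t) = 0 := by
            have h1 := hCT (n + 1) (by omega) hn hc1.symm
            simp only [Nat.add_sub_cancel] at h1
            have h2 : ∑ s ∈ Ioc 0 n, d s ≤ ∑ s ∈ Ioc 0 T, d s := by
              rw [← Finset.sum_Ioc_consecutive d (Nat.zero_le n) hn']
              have : 0 ≤ ∑ s ∈ Ioc n T, d s :=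
                Finset.sum_nonneg fun s hs => by
                  rw [Finset.mem_Ioc] at hs; exact hd0 s (by omega) hs.2
              linarith
            rw [Finset.sum_sub_distrib]
            have := hps n hn'
            rw [htot, h1] at h2
            linarith
          rw [hEz, zero_mul, zero_mul]
        · -- c (n+1) > 0 hence c n ≥ c (n+1) > 0 and lam n ≤ lam (n+1)
          have hcn : c (n + 1) ≤ c n := hmono n hpos hn
          have hlamle : lam n ≤ lam (n + 1) := by
            simp only [hlam]
            have h1 : 0 < Real.sqrt (c (n + 1)) := Real.sqrt_pos.2 hc1
            have h2 : Real.sqrt (c (n + 1)) ≤ Real.sqrt (c n) := Real.sqrt_le_sqrt hcn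
            have h3 : (0:ℝ) < 2 * Real.sqrt (c (n + 1)) := by linarith
            exact inv_anti₀ h3 (by linarith)
          exact mul_le_mul_of_nonneg_left hlamle hE
      have : (d (n+1) - c (n+1)) * lam (n+1) = (d (n+1) - c (n+1)) * lam (n+1) := rfl
      calc ∑ t ∈ Ioc 0 n, (d t - c t) * lam t + (d (n+1) - c (n+1)) * lam (n+1)
          ≤ (∑ t ∈ Ioc 0 n, (d t - c t)) * lam n + (d (n+1) - c (n+1)) * lam (n+1) := by
            linarith [ih']
        _ ≤ (∑ t ∈ Ioc 0 n, (d t - c t)) * lam (n+1) + (d (n+1) - c (n+1)) * lam (n+1) := by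
            linarith [key]
        _ = (∑ t ∈ Ioc 0 n, (d t - c t) + (d (n+1) - c (n+1))) * lam (n+1) := by ring
  -- pointwise tangent bound
  have hpt : ∀ t ∈ Ioc 0 T, Real.sqrt (d t) ≤ Real.sqrt (c t) + (d t - c t) * lam t := by
    intro t ht
    rw [Finset.mem_Ioc] at ht
    exact sqrt_tangent (hc0 t ht.1 ht.2) (hd0 t ht.1 ht.2) (hdzero t ht.1 ht.2)
  calc ∑ t ∈ Ioc 0 T, Real.sqrt (d t)
      ≤ ∑ t ∈ Ioc 0 T, (Real.sqrt (c t) + (d t - c t) * lam t) := Finset.sum_le_sum hpt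
    _ = ∑ t ∈ Ioc 0 T, Real.sqrt (c t) + ∑ t ∈ Ioc 0 T, (d t - c t) * lam t := by
        rw [Finset.sum_add_distrib]
    _ ≤ ∑ t ∈ Ioc 0 T, Real.sqrt (c t) + (∑ t ∈ Ioc 0 T, (d t - c t)) * lam T := by
        linarith [habel T le_rfl]
    _ = ∑ t ∈ Ioc 0 T, Real.sqrt (c t) := by
        rw [Finset.sum_sub_distrib, htot, sub_self, zero_mul, add_zero]

private lemma condexp_memLp_two {Ω : Type*} {m mΩ : MeasurableSpace Ω}
    (hm : m ≤ mΩ) (P : Measure Ω) [IsFiniteMeasure P] {f : Ω → ℝ} (hf : MemLp f 2 P) :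
    MemLp (P[f|m]) 2 P := by
  have hfi : Integrable f P := hf.integrable one_le_two
  set g : Ω →₂[P] ℝ := ((condExpL2 ℝ ℝ hm (hf.toLp f) : lpMeas ℝ ℝ m 2 P) : Ω →₂[P] ℝ) with hg
  have hae : (g : Ω → ℝ) =ᵐ[P] P[f|m] := by
    refine ae_eq_condExp_of_forall_setIntegral_eq hm hfi ?_ ?_ ?_
    · intro s _ _
      exact (integrable_condExpL2_of_isFiniteMeasure hm).integrableOn
    · intro s hs hμs
      rw [integral_condExpL2_eq hm (hf.toLp f) hs hμs.ne]
      exact setIntegral_congr_ae (hm s hs) ((MemLp.coeFn_toLp hf).mono fun x hx _ => hx)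
    · exact aestronglyMeasurable_condExpL2 hm _
  exact (Lp.memLp g).ae_eq hae

private lemma var_mono {Ω : Type*} {m₁ m₂ mΩ : MeasurableSpace Ω}
    (h12 : m₁ ≤ m₂) (h2 : m₂ ≤ mΩ) (P : Measure Ω) [IsProbabilityMeasure P]
    {f : Ω → ℝ} (hf : MemLp f 2 P) :
    ∫ ω, (f ω - (P[f|m₂]) ω) ^ 2 ∂P ≤ ∫ ω, (f ω - (P[f|m₁]) ω) ^ 2 ∂P := by
  have h1 : m₁ ≤ mΩ := h12.trans h2
  set g₁ : Ω → ℝ := P[f|m₁] with hg₁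
  set g₂ : Ω → ℝ := P[f|m₂] with hg₂
  have hg1m : MemLp g₁ 2 P := condexp_memLp_two h1 P hf
  have hg2m : MemLp g₂ 2 P := condexp_memLp_two h2 P hf
  set u : Ω → ℝ := fun ω => f ω - g₂ ω with hu
  set W : Ω → ℝ := fun ω => g₂ ω - g₁ ω with hW
  have hum : MemLp u 2 P := hf.sub hg2m
  have hWm : MemLp W 2 P := hg2m.sub hg1m
  have huW : Integrable (W * u) P := by
    refine Integrable.mono' ((hWm.integrable_sq).add (hum.integrable_sq))
      (hWm.aestronglyMeasurable.mul hum.aestronglyMeasurable) ?_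
    filter_upwards with ω
    simp only [Pi.mul_apply, Pi.add_apply, Real.norm_eq_abs, abs_mul]
    nlinarith [sq_nonneg (|W ω| - |u ω|), abs_nonneg (W ω), abs_nonneg (u ω),
      sq_abs (W ω), sq_abs (u ω)]
  have hWsm : StronglyMeasurable[m₂] W :=
    stronglyMeasurable_condExp.sub (stronglyMeasurable_condExp.mono h12)
  -- cross term is zero
  have hcross : ∫ ω, W ω * u ω ∂P = 0 := by
    have hui : Integrable u P := hum.integrable one_le_two
    have h2' := condExp_mul_of_stronglyMeasurable_left hWsm huW hui
    have hu0 : P[u|m₂] =ᵐ[P] 0 := by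
      have hsub : P[u|m₂] =ᵐ[P] P[f|m₂] - P[g₂|m₂] :=
        condExp_sub (hf.integrable one_le_two) (hg2m.integrable one_le_two) m₂
      have hgg : P[g₂|m₂] = g₂ :=
        condExp_of_stronglyMeasurable h2 stronglyMeasurable_condExp
          (hg2m.integrable one_le_two)
      filter_upwards [hsub] with ω hω
      simp [hω, hgg]
      exact sub_self _
    have : ∫ ω, W ω * u ω ∂P = ∫ ω, (P[W * u|m₂]) ω ∂P := (integral_condExp h2 (f := W * u)).symm
    rw [this]
    have hzero : P[W * u|m₂] =ᵐ[P] 0 := by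
      filter_upwards [h2', hu0] with ω hω hω0
      simp only [Pi.mul_apply, Pi.zero_apply] at *
      rw [hω, hω0, mul_zero]
    rw [integral_congr_ae hzero]
    simp
  -- Pythagoras
  have hexpand : ∀ ω, (f ω - g₁ ω) ^ 2 = u ω ^ 2 + 2 * (W ω * u ω) + W ω ^ 2 := by
    intro ω; simp only [hu, hW]; ring
  have hint1 : Integrable (fun ω => u ω ^ 2) P := hum.integrable_sq
  have hint2 : Integrable (fun ω => 2 * (W ω * u ω)) P := by
    simpa [Pi.mul_apply] using huW.const_mul 2
  have hint12 : Integrable (fun ω => u ω ^ 2 + 2 * (W ω * u ω)) P := hint1.add hint2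
  have hint3 : Integrable (fun ω => W ω ^ 2) P := hWm.integrable_sq
  have hsum : ∫ ω, (f ω - g₁ ω) ^ 2 ∂P
      = ∫ ω, u ω ^ 2 ∂P + 2 * ∫ ω, W ω * u ω ∂P + ∫ ω, W ω ^ 2 ∂P := by
    simp_rw [hexpand]
    rw [integral_add hint12 hint3, integral_add hint1 hint2, integral_const_mul]
  have hWnn : 0 ≤ ∫ ω, W ω ^ 2 ∂P := integral_nonneg fun ω => sq_nonneg _
  have : ∫ ω, (f ω - g₂ ω) ^ 2 ∂P = ∫ ω, u ω ^ 2 ∂P := rfl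
  rw [this, hsum, hcross]
  linarith

-- value of the constant conditional variance as an integral
private lemma const_var_eq {Ω : Type*} {m mΩ : MeasurableSpace Ω}
    (hm : m ≤ mΩ) (P : Measure Ω) [IsProbabilityMeasure P] {f : Ω → ℝ} (hf : MemLp f 2 P)
    {v : ℝ}
    (hv : (condExp m P fun ω => (f ω - (condExp m P f) ω) ^ 2) =ᵐ[P] fun _ => v) :
    v = ∫ ω, (f ω - (P[f|m]) ω) ^ 2 ∂P := by
  have hint : Integrable (fun ω => (f ω - (P[f|m]) ω) ^ 2) P :=
    (hf.sub (condexp_memLp_two hm P hf)).integrable_sq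
  have h1 : ∫ ω, (condExp m P fun ω => (f ω - (condExp m P f) ω) ^ 2) ω ∂P
      = ∫ ω, (f ω - (P[f|m]) ω) ^ 2 ∂P := integral_condExp hm
  have h2 : ∫ ω, (condExp m P fun ω => (f ω - (condExp m P f) ω) ^ 2) ω ∂P
      = ∫ _, v ∂P := integral_congr_ae hv
  rw [integral_const] at h2
  simp only [measure_univ, probReal_univ, ENNReal.toReal_one, smul_eq_mul, one_mul] at h2
  rw [← h1, h2]

/-- Monotonicity of the limiting multi-period value in information: with
`F_t = σ((X,Y)_{≤t}) ⊆ G_t = σ((X,Z)_{≤t})`, both processes jointly Gaussian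
with the cashflow `X`, nonrandom conditional variances
`vF t = Var(Σ X_s | F_t)`, `vG t = Var(Σ X_s | G_t)`, and nonincreasing variance
increments for `F` (convexity), the value computed with the smaller filtration
dominates:
`E[Σ X_t] + φ₀ Σ_t √(vG_{t-1} - vG_t) ≤ E[Σ X_t] + φ₀ Σ_t √(vF_{t-1} - vF_t)`. -/
theorem stmt_16 {Ω : Type*} (F G : ℕ → MeasurableSpace Ω) [mΩ : MeasurableSpace Ω]
    (P : Measure Ω) [IsProbabilityMeasure P] (T d e : ℕ) (hT : 1 ≤ T)
    (X : ℕ → Ω → ℝ) (Y : ℕ → Ω → Fin d → ℝ) (Z : ℕ → Ω → Fin e → ℝ)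
    (hX : ∀ t, Measurable (X t)) (hY : ∀ t, Measurable (Y t)) (hZ : ∀ t, Measurable (Z t))
    (hX2 : ∀ t, MemLp (X t) 2 P)
    -- the filtrations generated by (X, Y) and (X, Z)
    (hF : ∀ t, F t = ⨆ s ∈ Finset.Icc 1 t,
      (MeasurableSpace.comap (X s) inferInstance ⊔ MeasurableSpace.comap (Y s) inferInstance))
    (hG : ∀ t, G t = ⨆ s ∈ Finset.Icc 1 t,
      (MeasurableSpace.comap (X s) inferInstance ⊔ MeasurableSpace.comap (Z s) inferInstance))
    -- (X, Y) and (X, Z) are Gaussian processes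
    (hGaussF : ∀ (u : ℕ → ℝ) (v : ℕ → Fin d → ℝ), ∃ (mean : ℝ) (s : NNReal),
      P.map (fun ω => ∑ t ∈ Finset.Icc 1 T, (u t * X t ω + ∑ i, v t i * Y t ω i))
        = gaussianReal mean s)
    (hGaussG : ∀ (u : ℕ → ℝ) (v : ℕ → Fin e → ℝ), ∃ (mean : ℝ) (s : NNReal),
      P.map (fun ω => ∑ t ∈ Finset.Icc 1 T, (u t * X t ω + ∑ i, v t i * Z t ω i))
        = gaussianReal mean s)
    -- F_t ⊆ G_t for every t
    (hFG : ∀ t, F t ≤ G t)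
    -- the (nonrandom) conditional variances of the aggregate cashflow
    (vF vG : ℕ → ℝ)
    (hvF : ∀ t ≤ T,
      (condExp (F t) P fun ω =>
          ((∑ s ∈ Finset.Icc 1 T, X s ω)
            - (condExp (F t) P fun ω' => ∑ s ∈ Finset.Icc 1 T, X s ω') ω) ^ 2)
        =ᵐ[P] fun _ => vF t)
    (hvG : ∀ t ≤ T,
      (condExp (G t) P fun ω =>
          ((∑ s ∈ Finset.Icc 1 T, X s ω)
            - (condExp (G t) P fun ω' => ∑ s ∈ Finset.Icc 1 T, X s ω') ω) ^ 2)
        =ᵐ[P] fun _ => vG t)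
    -- convexity: the variance increments along F are nonincreasing in t
    (hconvex : ∀ t, 1 ≤ t → t + 1 ≤ T → vF t - vF (t + 1) ≤ vF (t - 1) - vF t)
    -- the nonnegative constant φ₀(ε₁)
    (φ₀ : ℝ) (hφ₀ : 0 ≤ φ₀) :
    (∫ ω, ∑ t ∈ Finset.Icc 1 T, X t ω ∂P)
        + φ₀ * ∑ t ∈ Finset.Icc 1 T, Real.sqrt (vG (t - 1) - vG t)
      ≤ (∫ ω, ∑ t ∈ Finset.Icc 1 T, X t ω ∂P)
        + φ₀ * ∑ t ∈ Finset.Icc 1 T, Real.sqrt (vF (t - 1) - vF t) := by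
  have hFle : ∀ t, F t ≤ mΩ := by
    intro t; rw [hF t]
    refine iSup_le fun s => iSup_le fun _ => sup_le ?_ ?_
    · exact measurable_iff_comap_le.mp (hX s)
    · exact measurable_iff_comap_le.mp (hY s)
  have hGle : ∀ t, G t ≤ mΩ := by
    intro t; rw [hG t]
    refine iSup_le fun s => iSup_le fun _ => sup_le ?_ ?_
    · exact measurable_iff_comap_le.mp (hX s)
    · exact measurable_iff_comap_le.mp (hZ s)
  have hFmono : ∀ a b, a ≤ b → F a ≤ F b := by
    intro a b hab; rw [hF a, hF b]
    exact biSup_mono fun s hs => Finset.Icc_subset_Icc_right hab hs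
  have hGmono : ∀ a b, a ≤ b → G a ≤ G b := by
    intro a b hab; rw [hG a, hG b]
    exact biSup_mono fun s hs => Finset.Icc_subset_Icc_right hab hs
  have hS2 : MemLp (fun ω => ∑ s ∈ Finset.Icc 1 T, X s ω) 2 P :=
    memLp_finset_sum _ fun s _ => hX2 s
  have hvFeq : ∀ t, t ≤ T → vF t
      = ∫ ω, ((∑ s ∈ Finset.Icc 1 T, X s ω)
          - (P[(fun ω' => ∑ s ∈ Finset.Icc 1 T, X s ω')|F t]) ω) ^ 2 ∂P :=
    fun t ht => const_var_eq (hFle t) P hS2 (hvF t ht)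
  have hvGeq : ∀ t, t ≤ T → vG t
      = ∫ ω, ((∑ s ∈ Finset.Icc 1 T, X s ω)
          - (P[(fun ω' => ∑ s ∈ Finset.Icc 1 T, X s ω')|G t]) ω) ^ 2 ∂P :=
    fun t ht => const_var_eq (hGle t) P hS2 (hvG t ht)
  -- G gives smaller conditional variance than F
  have hle : ∀ t, t ≤ T → vG t ≤ vF t := by
    intro t ht
    rw [hvFeq t ht, hvGeq t ht]
    exact var_mono (hFG t) (hGle t) P hS2
  -- conditional variances are nonincreasing in t
  have hvFmono : ∀ a b, a ≤ b → b ≤ T → vF b ≤ vF a := by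
    intro a b hab hbT
    rw [hvFeq a (hab.trans hbT), hvFeq b hbT]
    exact var_mono (hFmono a b hab) (hFle b) P hS2
  have hvGmono : ∀ a b, a ≤ b → b ≤ T → vG b ≤ vG a := by
    intro a b hab hbT
    rw [hvGeq a (hab.trans hbT), hvGeq b hbT]
    exact var_mono (hGmono a b hab) (hGle b) P hS2
  -- at time 0 both filtrations are trivial
  have hFG0 : F 0 = G 0 := by
    rw [hF 0, hG 0, Finset.Icc_eq_empty (by omega)]
    simp
  have hv00 : vF 0 = vG 0 := by
    rw [hvFeq 0 (Nat.zero_le T), hvGeq 0 (Nat.zero_le T), hFG0]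
  -- at time T the aggregate cashflow is measurable, so the variance vanishes
  have hSmeasF : StronglyMeasurable[F T] (fun ω => ∑ s ∈ Finset.Icc 1 T, X s ω) := by
    refine Measurable.stronglyMeasurable ?_
    refine Finset.measurable_sum _ fun s hs => ?_
    refine measurable_iff_comap_le.mpr ?_
    rw [hF T]
    exact le_sup_left.trans (le_biSup (fun s => MeasurableSpace.comap (X s) inferInstance
      ⊔ MeasurableSpace.comap (Y s) inferInstance) hs)
  have hSmeasG : StronglyMeasurable[G T] (fun ω => ∑ s ∈ Finset.Icc 1 T, X s ω) := by
    refine Measurable.stronglyMeasurable ?_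
    refine Finset.measurable_sum _ fun s hs => ?_
    refine measurable_iff_comap_le.mpr ?_
    rw [hG T]
    exact le_sup_left.trans (le_biSup (fun s => MeasurableSpace.comap (X s) inferInstance
      ⊔ MeasurableSpace.comap (Z s) inferInstance) hs)
  have hvFT : vF T = 0 := by
    rw [hvFeq T le_rfl,
      condExp_of_stronglyMeasurable (hFle T) hSmeasF (hS2.integrable one_le_two)]
    simp
  have hvGT : vG T = 0 := by
    rw [hvGeq T le_rfl,
      condExp_of_stronglyMeasurable (hGle T) hSmeasG (hS2.integrable one_le_two)]
    simp
  -- apply the deterministic rearrangement inequality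
  have hsq : ∑ t ∈ Finset.Icc 1 T, Real.sqrt (vG (t - 1) - vG t)
      ≤ ∑ t ∈ Finset.Icc 1 T, Real.sqrt (vF (t - 1) - vF t) := by
    rw [show Finset.Icc 1 T = Finset.Ioc 0 T from Finset.Icc_add_one_left_eq_Ioc 0 T]
    have hh1 : ∀ t, 1 ≤ t → t ≤ T → 0 ≤ vF (t - 1) - vF t := fun t h1 h2 =>
      sub_nonneg.mpr (hvFmono (t - 1) t (Nat.sub_le t 1) h2)
    have hh2 : ∀ t, 1 ≤ t → t ≤ T → 0 ≤ vG (t - 1) - vG t := fun t h1 h2 =>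
      sub_nonneg.mpr (hvGmono (t - 1) t (Nat.sub_le t 1) h2)
    have hh3 : ∀ t, 1 ≤ t → t + 1 ≤ T →
        vF ((t + 1) - 1) - vF (t + 1) ≤ vF (t - 1) - vF t := by
      intro t h1 h2
      simpa only [Nat.add_sub_cancel] using hconvex t h1 h2
    have hh4 : ∀ t, t ≤ T → ∑ s ∈ Finset.Ioc 0 t, (vF (s - 1) - vF s)
        ≤ ∑ s ∈ Finset.Ioc 0 t, (vG (s - 1) - vG s) := by
      intro t ht
      rw [telescope_Ioc vF t, telescope_Ioc vG t]
      have := hle t ht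
      linarith [hv00]
    have hh5 : ∑ s ∈ Finset.Ioc 0 T, (vG (s - 1) - vG s)
        = ∑ s ∈ Finset.Ioc 0 T, (vF (s - 1) - vF s) := by
      rw [telescope_Ioc vF T, telescope_Ioc vG T, hvFT, hvGT]
      linarith [hv00]
    exact sum_sqrt_le T (fun t => vF (t - 1) - vF t) (fun t => vG (t - 1) - vG t)
      hh1 hh2 hh3 hh4 hh5
  exact add_le_add_right (mul_le_mul_of_nonneg_left hsq hφ₀) _
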